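/- For every integer m ≥ 0, the homogeneous component Γ(S)_m decomposes as the internal direct sum Γ(S)_m = ⊕_{j=0}^{k−1} x̄_1^j · Q(m−j), where x̄_1 denotes the class of x_1 in Γ(S); that is, every element of Γ(S)_m can be written uniquely in the form ∑_{j=0}^{k−1} x̄_1^j q_j with q_j ∈ Q(m−j). -/

import Mathlib

open MvPolynomial

open Fin.NatCast in
/-- The homogeneous ideal `I(S)` of a generalized Fermat curve of type `(k,n)`, generated
by the forms `lam i * x₀^k + x₁^k + x_{i+2}^k` for `0 ≤ i ≤ n - 2` (with `lam 0 = 1`). -/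
noncomputable def fermatIdeal (n k : ℕ) (lam : ℕ → ℂ) :
    Ideal (MvPolynomial (Fin (n + 1)) ℂ) :=
  Ideal.span ((fun i : ℕ =>
    C (lam i) * X 0 ^ k + X 1 ^ k + X ((i + 2 : ℕ) : Fin (n + 1)) ^ k) ''
    {i : ℕ | i ≤ n - 2})

/-- `Γ(S)_d`: the image in `Γ(S) = ℂ[x₀,…,xₙ]/I(S)` of the homogeneous polynomials of
degree `d`. -/
noncomputable def gammaSubmodule (n k : ℕ) (lam : ℕ → ℂ) (d : ℕ) :
    Submodule ℂ (MvPolynomial (Fin (n + 1)) ℂ ⧸ fermatIdeal n k lam) :=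
  Submodule.map (Ideal.Quotient.mkₐ ℂ (fermatIdeal n k lam)).toLinearMap
    (homogeneousSubmodule (Fin (n + 1)) ℂ d)

/-- `Q(d)`: the image in `Γ(S) = ℂ[x₀,…,xₙ]/I(S)` of the homogeneous polynomials of
degree `d` in the variables `x₀, x₂, x₃, …, xₙ` (not involving `x₁`), with `Q(d) = 0`
for `d < 0`. -/
noncomputable def qSubmodule (n k : ℕ) (lam : ℕ → ℂ) (d : ℤ) :
    Submodule ℂ (MvPolynomial (Fin (n + 1)) ℂ ⧸ fermatIdeal n k lam) :=
  if 0 ≤ d then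
    Submodule.map (Ideal.Quotient.mkₐ ℂ (fermatIdeal n k lam)).toLinearMap
      ((homogeneousSubmodule (Fin (n + 1)) ℂ d.toNat) ⊓
        (Subalgebra.toSubmodule (MvPolynomial.supported ℂ {j : Fin (n + 1) | j ≠ 1})))
  else ⊥

namespace Stmt4Aux

open Fin.NatCast

variable (n k : ℕ) (lam : ℕ → ℂ)

/-- The generators of the Fermat ideal. -/
noncomputable def fgen (i : ℕ) : MvPolynomial (Fin (n + 1)) ℂ :=
  C (lam i) * X 0 ^ k + X 1 ^ k + X ((i + 2 : ℕ) : Fin (n + 1)) ^ k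

lemma fermatIdeal_eq : fermatIdeal n k lam = Ideal.span (fgen n k lam '' {i | i ≤ n - 2}) := rfl

lemma fgen_mem {i : ℕ} (hi : i ≤ n - 2) : fgen n k lam i ∈ fermatIdeal n k lam := by
  rw [fermatIdeal_eq]
  exact Ideal.subset_span (Set.mem_image_of_mem _ hi)

lemma cast_ne_one (hn : 2 ≤ n) {i : ℕ} (h2 : 2 ≤ i) (hi : i ≤ n) :
    ((i : ℕ) : Fin (n + 1)) ≠ 1 := by
  intro h
  apply_fun Fin.val at h
  rw [Fin.val_natCast, Fin.val_one', Nat.mod_eq_of_lt (by omega), Nat.mod_eq_of_lt (by omega)] at h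
  omega

lemma zero_ne_one' (hn : 2 ≤ n) : (0 : Fin (n + 1)) ≠ 1 := by
  intro h
  apply_fun Fin.val at h
  rw [Fin.val_zero, Fin.val_one', Nat.mod_eq_of_lt (by omega)] at h
  omega

lemma mk_X1_pow_k (hk : 0 < k) (hlam0 : lam 0 = 1) :
    Ideal.Quotient.mk (fermatIdeal n k lam) (X 1 ^ k) =
      Ideal.Quotient.mk (fermatIdeal n k lam)
        (-(X 0 ^ k + X ((2 : ℕ) : Fin (n + 1)) ^ k)) := by
  rw [Ideal.Quotient.eq]
  have h : X 1 ^ k - -(X 0 ^ k + X ((2 : ℕ) : Fin (n + 1)) ^ k) = fgen n k lam 0 := by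
    rw [fgen, hlam0, show ((0 : ℕ) + 2) = 2 from rfl, C_1]
    push_cast
    ring
  rw [h]
  exact fgen_mem n k lam (Nat.zero_le _)


/-- The "x₁-free part" of the generators. -/
noncomputable def gpart (i : ℕ) : MvPolynomial (Fin (n + 1)) ℂ :=
  C (lam i) * X 0 ^ k + X ((i + 2 : ℕ) : Fin (n + 1)) ^ k

lemma fgen_eq_gpart (i : ℕ) : fgen n k lam i = X 1 ^ k + gpart n k lam i := by
  rw [fgen, gpart]; ring

/-- The auxiliary ideal spanned by differences of the generators. -/
noncomputable def Jideal : Ideal (MvPolynomial (Fin (n + 1)) ℂ) :=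
  Ideal.span ((fun i : ℕ => fgen n k lam i - fgen n k lam 0) '' {i : ℕ | i ≤ n - 2})

lemma Jideal_le : Jideal n k lam ≤ fermatIdeal n k lam := by
  rw [Jideal, Ideal.span_le]
  rintro - ⟨i, hi, rfl⟩
  exact sub_mem (fgen_mem n k lam hi) (fgen_mem n k lam (Nat.zero_le _))

lemma Jideal_ne_top (hk : 0 < k) : Jideal n k lam ≠ ⊤ := by
  intro htop
  have hle : Jideal n k lam ≤ RingHom.ker (constantCoeff (R := ℂ) (σ := Fin (n + 1))) := by
    rw [Jideal, Ideal.span_le]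
    rintro - ⟨i, hi, rfl⟩
    simp [RingHom.mem_ker, fgen, zero_pow hk.ne']
  have h1 : (1 : MvPolynomial (Fin (n + 1)) ℂ) ∈ Jideal n k lam := htop ▸ Submodule.mem_top
  have := hle h1
  simp [RingHom.mem_ker] at this

/-- The evaluation map separating the variable `x₁`. -/
noncomputable def Phi :
    MvPolynomial (Fin (n + 1)) ℂ →+*
      Polynomial (MvPolynomial (Fin (n + 1)) ℂ ⧸ Jideal n k lam) :=
  eval₂Hom (Polynomial.C.comp ((Ideal.Quotient.mk (Jideal n k lam)).comp MvPolynomial.C))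
    (fun i => if i = 1 then Polynomial.X
      else Polynomial.C (Ideal.Quotient.mk (Jideal n k lam) (X i)))

lemma Phi_X1 : Phi n k lam (X 1) = Polynomial.X := by
  rw [Phi, eval₂Hom_X']; simp

lemma Phi_X_of_ne {i : Fin (n + 1)} (hi : i ≠ 1) :
    Phi n k lam (X i) = Polynomial.C (Ideal.Quotient.mk (Jideal n k lam) (X i)) := by
  rw [Phi, eval₂Hom_X']; simp [hi]

lemma Phi_C (c : ℂ) :
    Phi n k lam (C c) = Polynomial.C (Ideal.Quotient.mk (Jideal n k lam) (C c)) := by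
  rw [Phi]; simp

lemma Phi_supported {p : MvPolynomial (Fin (n + 1)) ℂ}
    (hp : p ∈ supported ℂ {j : Fin (n + 1) | j ≠ 1}) :
    Phi n k lam p = Polynomial.C (Ideal.Quotient.mk (Jideal n k lam) p) := by
  rw [supported_eq_adjoin_X] at hp
  induction hp using Algebra.adjoin_induction with
  | mem x hx =>
    obtain ⟨i, hi, rfl⟩ := hx
    exact Phi_X_of_ne n k lam hi
  | algebraMap r =>
    rw [show (algebraMap ℂ (MvPolynomial (Fin (n + 1)) ℂ)) r = C r from rfl]
    exact Phi_C n k lam r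
  | add x y hx hy ihx ihy => rw [map_add, ihx, ihy, map_add, map_add]
  | mul x y hx hy ihx ihy => rw [map_mul, ihx, ihy, map_mul, map_mul]

lemma gpart_supported (hn : 2 ≤ n) {i : ℕ} (hi : i ≤ n - 2) :
    gpart n k lam i ∈ supported ℂ {j : Fin (n + 1) | j ≠ 1} := by
  rw [gpart]
  refine add_mem (mul_mem ?_ (pow_mem ?_ k)) (pow_mem ?_ k)
  · exact Subalgebra.algebraMap_mem _ (lam i)
  · exact (X_mem_supported).mpr (zero_ne_one' n hn)
  · exact (X_mem_supported).mpr (cast_ne_one n hn (by omega) (by omega))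

lemma mk_gpart_eq (hn : 2 ≤ n) {i : ℕ} (hi : i ≤ n - 2) :
    Ideal.Quotient.mk (Jideal n k lam) (gpart n k lam i) =
      Ideal.Quotient.mk (Jideal n k lam) (gpart n k lam 0) := by
  rw [Ideal.Quotient.eq]
  have h : gpart n k lam i - gpart n k lam 0 = fgen n k lam i - fgen n k lam 0 := by
    rw [fgen_eq_gpart, fgen_eq_gpart]; ring
  rw [h, Jideal]
  exact Ideal.subset_span (Set.mem_image_of_mem _ hi)

lemma Phi_fgen (hn : 2 ≤ n) {i : ℕ} (hi : i ≤ n - 2) :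
    Phi n k lam (fgen n k lam i) =
      Polynomial.X ^ k +
        Polynomial.C (Ideal.Quotient.mk (Jideal n k lam) (gpart n k lam 0)) := by
  rw [fgen_eq_gpart, map_add, map_pow, Phi_X1,
    Phi_supported n k lam (gpart_supported n k lam hn hi), mk_gpart_eq n k lam hn hi]


set_option maxHeartbeats 1000000 in
lemma key_unique (hk : 0 < k) (hn : 2 ≤ n)
    (p : ℕ → MvPolynomial (Fin (n + 1)) ℂ)
    (hp : ∀ j, j < k → p j ∈ supported ℂ {j : Fin (n + 1) | j ≠ 1})
    (hP : (∑ j ∈ Finset.range k, X 1 ^ j * p j) ∈ fermatIdeal n k lam) :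
    ∀ j, j < k → p j ∈ fermatIdeal n k lam := by
  haveI : Nontrivial (MvPolynomial (Fin (n + 1)) ℂ ⧸ Jideal n k lam) :=
    Ideal.Quotient.nontrivial_iff.mpr (Jideal_ne_top n k lam hk)
  set mkJ := Ideal.Quotient.mk (Jideal n k lam) with hmkJ
  set h : Polynomial (MvPolynomial (Fin (n + 1)) ℂ ⧸ Jideal n k lam) :=
    Polynomial.X ^ k + Polynomial.C (mkJ (gpart n k lam 0)) with hh
  have hmonic : h.Monic := Polynomial.monic_X_pow_add
    (lt_of_le_of_lt Polynomial.degree_C_le (by exact_mod_cast hk))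
  have hdeg : h.degree = k := Polynomial.degree_X_pow_add_C hk _
  -- the image of the sum is divisible by h
  have hmem : Phi n k lam (∑ j ∈ Finset.range k, X 1 ^ j * p j) ∈ Ideal.span {h} := by
    have h1 := Ideal.mem_map_of_mem (Phi n k lam) hP
    have h2 : Ideal.map (Phi n k lam) (fermatIdeal n k lam) ≤ Ideal.span {h} := by
      rw [fermatIdeal_eq, Ideal.map_span, Ideal.span_le]
      rintro - ⟨-, ⟨i, hi, rfl⟩, rfl⟩
      rw [Phi_fgen n k lam hn hi]
      exact Ideal.subset_span rfl
    exact h2 h1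
  have hΦP : Phi n k lam (∑ j ∈ Finset.range k, X 1 ^ j * p j) =
      ∑ j ∈ Finset.range k, Polynomial.X ^ j * Polynomial.C (mkJ (p j)) := by
    rw [map_sum]
    refine Finset.sum_congr rfl fun j hj => ?_
    rw [map_mul, map_pow, Phi_X1, Phi_supported n k lam (hp j (Finset.mem_range.mp hj))]
  have hdlt : (∑ j ∈ Finset.range k, Polynomial.X ^ j *
      Polynomial.C (mkJ (p j))).degree < ((k : ℕ) : WithBot ℕ) := by
    refine lt_of_le_of_lt (Polynomial.degree_sum_le _ _) ?_
    rw [Finset.sup_lt_iff (by exact_mod_cast WithBot.bot_lt_coe k)]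
    intro j hj
    refine lt_of_le_of_lt (Polynomial.degree_mul_le _ _) ?_
    refine lt_of_le_of_lt (add_le_add (Polynomial.degree_X_pow_le j) Polynomial.degree_C_le) ?_
    rw [add_zero]
    exact_mod_cast Nat.cast_lt.mpr (Finset.mem_range.mp hj)
  obtain ⟨u, hu⟩ := (Ideal.mem_span_singleton (x := Phi n k lam (∑ j ∈ Finset.range k, X 1 ^ j * p j)) (y := h)).mp hmem
  have hzero : Phi n k lam (∑ j ∈ Finset.range k, X 1 ^ j * p j) = 0 := by
    by_contra hne
    have hu0 : u ≠ 0 := by rintro rfl; rw [mul_zero] at hu; exact hne hu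
    rw [hΦP] at hu
    rw [hu, mul_comm h u, hmonic.degree_mul, hdeg] at hdlt
    have h0 : (0 : WithBot ℕ) ≤ u.degree := Polynomial.zero_le_degree_iff.mpr hu0
    have : (k : WithBot ℕ) ≤ u.degree + k := by
      calc (k : WithBot ℕ) = 0 + k := (zero_add _).symm
      _ ≤ u.degree + k := add_le_add_left h0 _
    exact absurd (lt_of_le_of_lt this hdlt) (lt_irrefl _)
  intro j hj
  have hcj : mkJ (p j) = 0 := by
    have := congrArg (fun f => Polynomial.coeff f j) (hΦP.symm.trans hzero)
    simp only [Polynomial.finset_sum_coeff, Polynomial.coeff_zero] at this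
    rw [Finset.sum_eq_single j (fun b hb hbj => by
        rw [mul_comm (Polynomial.X ^ b) (Polynomial.C (mkJ (p b))), Polynomial.C_mul_X_pow_eq_monomial, Polynomial.coeff_monomial,
          if_neg hbj])
      (fun hjn => absurd (Finset.mem_range.mpr hj) hjn)] at this
    rwa [mul_comm (Polynomial.X ^ j) (Polynomial.C (mkJ (p j))), Polynomial.C_mul_X_pow_eq_monomial, Polynomial.coeff_monomial,
      if_pos rfl] at this
  exact Jideal_le n k lam (Ideal.Quotient.eq_zero_iff_mem.mp hcj)


noncomputable def wpoly : MvPolynomial (Fin (n + 1)) ℂ :=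
  -(X 0 ^ k + X ((2 : ℕ) : Fin (n + 1)) ^ k)

lemma mk_X1_pow_k' (hk : 0 < k) (hlam0 : lam 0 = 1) :
    (Ideal.Quotient.mk (fermatIdeal n k lam) (X 1)) ^ k =
      Ideal.Quotient.mk (fermatIdeal n k lam) (wpoly n k) := by
  rw [← map_pow, wpoly]
  exact mk_X1_pow_k n k lam hk hlam0

lemma wpoly_hom : (wpoly n k).IsHomogeneous (1 * k) :=
  (((isHomogeneous_X ℂ _).pow k).add ((isHomogeneous_X ℂ _).pow k)).neg

lemma wpoly_supported (hn : 2 ≤ n) : wpoly n k ∈ supported ℂ {j : Fin (n + 1) | j ≠ 1} := by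
  rw [wpoly]
  refine neg_mem (add_mem (pow_mem ?_ k) (pow_mem ?_ k))
  · exact X_mem_supported.mpr (zero_ne_one' n hn)
  · exact X_mem_supported.mpr (cast_ne_one n hn (by omega) (by omega))

lemma C_mem_supported (c : ℂ) (s : Set (Fin (n + 1))) : C c ∈ supported ℂ s := by
  rw [← MvPolynomial.algebraMap_eq]
  exact Subalgebra.algebraMap_mem _ c

lemma ex_monomial (hk : 0 < k) (hn : 2 ≤ n) (hlam0 : lam 0 = 1) (m : ℕ)
    (d : Fin (n + 1) →₀ ℕ) (hd : d.degree = m) (c : ℂ) :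
    ∃ q : ℕ → (MvPolynomial (Fin (n + 1)) ℂ ⧸ fermatIdeal n k lam),
      (∀ j, j < k → q j ∈ qSubmodule n k lam ((m : ℤ) - (j : ℤ))) ∧
      Ideal.Quotient.mk (fermatIdeal n k lam) (monomial d c) =
        ∑ j ∈ Finset.range k,
          (Ideal.Quotient.mk (fermatIdeal n k lam) (X 1)) ^ j * q j := by
  set mkI := Ideal.Quotient.mk (fermatIdeal n k lam) with hmkI
  set a := d 1 with ha
  set j0 := a % k with hj0
  set e := a / k with he
  have hdsum : d.degree = ∑ i ∈ Finset.univ, d i := by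
    rw [Finsupp.degree]
    exact Finset.sum_subset (Finset.subset_univ _)
      (fun i _ hi => Finsupp.notMem_support_iff.mp hi)
  have ham : a ≤ m := hd ▸ Finsupp.le_degree 1 d
  have hj0a : j0 ≤ a := Nat.mod_le _ _
  have hake : k * e + j0 = a := Nat.div_add_mod a k
  have hj0k : j0 < k := Nat.mod_lt _ hk
  have herest : ∑ i ∈ Finset.univ.erase 1, d i = m - a := by
    have h2 := Finset.add_sum_erase Finset.univ d (Finset.mem_univ 1)
    rw [← hdsum, hd, ← ha] at h2
    omega
  set rest : MvPolynomial (Fin (n + 1)) ℂ := ∏ i ∈ Finset.univ.erase 1, X i ^ d i with hrest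
  set term : MvPolynomial (Fin (n + 1)) ℂ := C c * wpoly n k ^ e * rest with hterm
  have hhom : term.IsHomogeneous (0 + 1 * k * e + ∑ i ∈ Finset.univ.erase 1, 1 * d i) := by
    refine ((isHomogeneous_C _ c).mul ((wpoly_hom n k).pow e)).mul ?_
    exact IsHomogeneous.prod _ _ _ (fun i _ => (isHomogeneous_X ℂ i).pow (d i))
  have hhom' : term.IsHomogeneous (m - j0) := by
    have heq : 0 + 1 * k * e + ∑ i ∈ Finset.univ.erase 1, 1 * d i = m - j0 := by
      simp only [one_mul, zero_add, herest]
      omega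
    rwa [heq] at hhom
  have hsupp : term ∈ supported ℂ {j : Fin (n + 1) | j ≠ 1} := by
    refine mul_mem (mul_mem (C_mem_supported n c _) (pow_mem (wpoly_supported n k hn) e))
      (prod_mem fun i hi => pow_mem ?_ (d i))
    exact X_mem_supported.mpr (Finset.mem_erase.mp hi).1
  have hnonneg : (0 : ℤ) ≤ (m : ℤ) - (j0 : ℤ) := by omega
  have hqmem : mkI term ∈ qSubmodule n k lam ((m : ℤ) - (j0 : ℤ)) := by
    rw [qSubmodule, if_pos hnonneg]
    refine Submodule.mem_map.mpr ⟨term, Submodule.mem_inf.mpr ⟨?_, ?_⟩, by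
      simp [Ideal.Quotient.mkₐ_eq_mk, hmkI]⟩
    · rw [mem_homogeneousSubmodule, Int.toNat_sub m j0]
      exact hhom'
    · exact (Subalgebra.mem_toSubmodule _).mpr hsupp
  have hmono : monomial d c = C c * X 1 ^ a * rest := by
    rw [monomial_eq, Finsupp.prod_fintype _ _ (fun i => pow_zero _),
      ← Finset.mul_prod_erase Finset.univ (fun i => X i ^ d i) (Finset.mem_univ 1), hrest]
    ring
  have hkey : mkI (monomial d c) = (mkI (X 1)) ^ j0 * mkI term := by
    rw [hmono, hterm, map_mul, map_mul, map_pow, map_mul, map_mul, map_pow,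
      ← hake, pow_add, pow_mul, mk_X1_pow_k' n k lam hk hlam0]
    ring
  refine ⟨fun j => if j = j0 then mkI term else 0, fun j hj => ?_, ?_⟩
  · by_cases hjj : j = j0
    · subst hjj
      simpa using hqmem
    · simpa [hjj] using Submodule.zero_mem (qSubmodule n k lam ((m : ℤ) - (j : ℤ)))
  · simp only [mul_ite, mul_zero]
    rw [Finset.sum_ite_eq' (Finset.range k) j0 (fun j => (mkI (X 1)) ^ j * mkI term),
      if_pos (Finset.mem_range.mpr hj0k), hkey]


lemma ex_poly (hk : 0 < k) (hn : 2 ≤ n) (hlam0 : lam 0 = 1) (m : ℕ)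
    (p : MvPolynomial (Fin (n + 1)) ℂ) (hp : p.IsHomogeneous m) :
    ∃ q : ℕ → (MvPolynomial (Fin (n + 1)) ℂ ⧸ fermatIdeal n k lam),
      (∀ j, j < k → q j ∈ qSubmodule n k lam ((m : ℤ) - (j : ℤ))) ∧
      Ideal.Quotient.mk (fermatIdeal n k lam) p =
        ∑ j ∈ Finset.range k,
          (Ideal.Quotient.mk (fermatIdeal n k lam) (X 1)) ^ j * q j := by
  set mkI := Ideal.Quotient.mk (fermatIdeal n k lam) with hmkI
  rw [← support_sum_monomial_coeff p, map_sum]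
  refine Finset.sum_induction _ (fun y => ∃ q : ℕ → (MvPolynomial (Fin (n + 1)) ℂ ⧸ fermatIdeal n k lam),
      (∀ j, j < k → q j ∈ qSubmodule n k lam ((m : ℤ) - (j : ℤ))) ∧
      y = ∑ j ∈ Finset.range k, (mkI (X 1)) ^ j * q j) ?_ ?_ ?_
  · rintro y1 y2 ⟨q1, hq1, rfl⟩ ⟨q2, hq2, rfl⟩
    refine ⟨q1 + q2, fun j hj => add_mem (hq1 j hj) (hq2 j hj), ?_⟩
    rw [← Finset.sum_add_distrib]
    exact Finset.sum_congr rfl fun j _ => (mul_add _ _ _).symm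
  · exact ⟨0, fun j hj => Submodule.zero_mem _, by simp⟩
  · intro d hd
    have hdm : d.degree = m := by
      by_contra hne
      exact (mem_support_iff.mp hd) (hp.coeff_eq_zero hne)
    obtain ⟨q, hq1, hq2⟩ := ex_monomial n k lam hk hn hlam0 m d hdm (coeff d p)
    exact ⟨q, hq1, hq2⟩

lemma q_rep (m : ℕ) (r : ℕ → (MvPolynomial (Fin (n + 1)) ℂ ⧸ fermatIdeal n k lam))
    (hr : ∀ j, j < k → r j ∈ qSubmodule n k lam ((m : ℤ) - (j : ℤ))) :
    ∃ pr : ℕ → MvPolynomial (Fin (n + 1)) ℂ,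
      ∀ j, j < k → (pr j ∈ supported ℂ {i : Fin (n + 1) | i ≠ 1} ∧
        Ideal.Quotient.mk (fermatIdeal n k lam) (pr j) = r j) := by
  have h : ∀ j, ∃ pj : MvPolynomial (Fin (n + 1)) ℂ, j < k →
      (pj ∈ supported ℂ {i : Fin (n + 1) | i ≠ 1} ∧
        Ideal.Quotient.mk (fermatIdeal n k lam) pj = r j) := by
    intro j
    by_cases hj : j < k
    · have hmem := hr j hj
      rw [qSubmodule] at hmem
      by_cases hd : (0 : ℤ) ≤ (m : ℤ) - (j : ℤ)
      · rw [if_pos hd] at hmem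
        obtain ⟨pp, hpp, heq⟩ := Submodule.mem_map.mp hmem
        exact ⟨pp, fun _ => ⟨(Subalgebra.mem_toSubmodule _).mp (Submodule.mem_inf.mp hpp).2,
          by simpa [Ideal.Quotient.mkₐ_eq_mk] using heq⟩⟩
      · rw [if_neg hd] at hmem
        rw [Submodule.mem_bot] at hmem
        exact ⟨0, fun _ => ⟨zero_mem _, by simp [hmem]⟩⟩
    · exact ⟨0, fun h' => absurd h' hj⟩
  choose pr hpr using h
  exact ⟨pr, hpr⟩

end Stmt4Aux

/-- every element of `Γ(S)_m` is written uniquely as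
`∑_{j=0}^{k-1} x̄₁^j q_j` with `q_j ∈ Q(m - j)`, i.e.
`Γ(S)_m = ⊕_{j=0}^{k-1} x̄₁^j · Q(m - j)`. -/
theorem stmt_4 (k n : ℕ) (hk : 2 ≤ k) (hn : 2 ≤ n)
    (lam : ℕ → ℂ) (hlam0 : lam 0 = 1)
    (hlam_ne0 : ∀ i, 1 ≤ i → i ≤ n - 2 → lam i ≠ 0)
    (hlam_ne1 : ∀ i, 1 ≤ i → i ≤ n - 2 → lam i ≠ 1)
    (hlam_inj : ∀ i j, i ≤ n - 2 → j ≤ n - 2 → lam i = lam j → i = j)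
    (m : ℕ) :
    ∀ y ∈ gammaSubmodule n k lam m,
      ∃ q : ℕ → (MvPolynomial (Fin (n + 1)) ℂ ⧸ fermatIdeal n k lam),
        (∀ j, j < k → q j ∈ qSubmodule n k lam ((m : ℤ) - (j : ℤ))) ∧
        y = ∑ j ∈ Finset.range k,
              (Ideal.Quotient.mk (fermatIdeal n k lam) (X 1)) ^ j * q j ∧
        ∀ q' : ℕ → (MvPolynomial (Fin (n + 1)) ℂ ⧸ fermatIdeal n k lam),
          (∀ j, j < k → q' j ∈ qSubmodule n k lam ((m : ℤ) - (j : ℤ))) →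
          y = ∑ j ∈ Finset.range k,
                (Ideal.Quotient.mk (fermatIdeal n k lam) (X 1)) ^ j * q' j →
          ∀ j, j < k → q' j = q j := by
  intro y hy
  set mkI := Ideal.Quotient.mk (fermatIdeal n k lam) with hmkI
  obtain ⟨p, hp, hyp⟩ := hy
  rw [SetLike.mem_coe, mem_homogeneousSubmodule] at hp
  obtain ⟨q, hqmem, hqsum⟩ := Stmt4Aux.ex_poly n k lam (by omega) hn hlam0 m p hp
  have hy' : y = mkI p := by
    rw [← hyp]
    simp [Ideal.Quotient.mkₐ_eq_mk, hmkI]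
  refine ⟨q, hqmem, by rw [hy', hqsum], ?_⟩
  intro q' hq'mem hq'sum j hj
  obtain ⟨pr, hpr⟩ := Stmt4Aux.q_rep n k lam m q hqmem
  obtain ⟨pr', hpr'⟩ := Stmt4Aux.q_rep n k lam m q' hq'mem
  have hdiff : (∑ i ∈ Finset.range k, X 1 ^ i * (pr' i - pr i)) ∈ fermatIdeal n k lam := by
    rw [← Ideal.Quotient.eq_zero_iff_mem, map_sum]
    have hterm : ∀ i ∈ Finset.range k, mkI (X 1 ^ i * (pr' i - pr i)) =
        (mkI (X 1)) ^ i * q' i - (mkI (X 1)) ^ i * q i := by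
      intro i hi
      rw [map_mul, map_pow, map_sub, (hpr' i (Finset.mem_range.mp hi)).2,
        (hpr i (Finset.mem_range.mp hi)).2]
      ring
    rw [Finset.sum_congr rfl hterm, Finset.sum_sub_distrib, ← hq'sum, hy', hqsum]
    exact sub_self _
  have hIj := Stmt4Aux.key_unique n k lam (by omega) hn (fun i => pr' i - pr i)
    (fun i hi => sub_mem (hpr' i hi).1 (hpr i hi).1) hdiff j hj
  have heq : mkI (pr' j) = mkI (pr j) := Ideal.Quotient.eq.mpr hIj
  rw [← (hpr' j hj).2, ← (hpr j hj).2, heq]
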